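/- The $q$-Gauss summation identity: for complex numbers $q, s, x, y$ with $|q| < 1$, $|s^2| < 1$, and $|xy| < 1$, one has $\sum_{i=0}^{\infty} \frac{(-s/x;q)_i (-s/y;q)_i}{(s^2;q)_i (q;q)_i} (xy)^i = \frac{(-sx;q)_\infty (-sy;q)_\infty}{(s^2;q)_\infty (xy;q)_\infty}$. -/

import Mathlib

noncomputable def qPoch (q a : ℂ) (m : ℕ) : ℂ := ∏ i ∈ Finset.range m, (1 - a * q ^ i)

open Filter Finset Topology Complex

namespace QG

noncomputable def PP (s q x : ℂ) (i : ℕ) : ℂ := ∏ k ∈ Finset.range i, (x + s * q ^ k)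
noncomputable def DD (q s : ℂ) (i : ℕ) : ℂ := qPoch q (s ^ 2) i * qPoch q q i
noncomputable def T (q s x y : ℂ) (i : ℕ) : ℂ := PP s q x i * PP s q y i / DD q s i
noncomputable def FF (q s x y : ℂ) : ℂ := ∑' i, T q s x y i

lemma one_sub_ne {a q : ℂ} (ha : ‖a‖ < 1) (hq : ‖q‖ ≤ 1) (k : ℕ) : 1 - a * q ^ k ≠ 0 := by
  have h : ‖a * q ^ k‖ < 1 := by
    rw [norm_mul, norm_pow]
    calc ‖a‖ * ‖q‖ ^ k ≤ ‖a‖ * 1 := by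
          have := pow_le_one₀ (norm_nonneg q) hq (n := k)
          exact mul_le_mul_of_nonneg_left this (norm_nonneg a)
      _ = ‖a‖ := mul_one _
      _ < 1 := ha
  intro hcon
  have : a * q ^ k = 1 := by linear_combination -hcon
  rw [this, norm_one] at h
  exact lt_irrefl _ h

lemma qPoch_ne_zero {a q : ℂ} (ha : ‖a‖ < 1) (hq : ‖q‖ ≤ 1) (m : ℕ) : qPoch q a m ≠ 0 := by
  unfold qPoch
  exact Finset.prod_ne_zero_iff.2 fun k _ => one_sub_ne ha hq k

lemma DD_ne {q s : ℂ} (hq : ‖q‖ < 1) (hs : ‖s ^ 2‖ < 1) (i : ℕ) : DD q s i ≠ 0 :=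
  mul_ne_zero (qPoch_ne_zero hs hq.le i) (qPoch_ne_zero hq hq.le i)

lemma PP_succ (s q x : ℂ) (i : ℕ) : PP s q x (i + 1) = PP s q x i * (x + s * q ^ i) :=
  Finset.prod_range_succ _ _

lemma DD_succ (q s : ℂ) (i : ℕ) :
    DD q s (i + 1) = DD q s i * ((1 - s ^ 2 * q ^ i) * (1 - q * q ^ i)) := by
  unfold DD qPoch
  rw [Finset.prod_range_succ, Finset.prod_range_succ]
  ring

lemma PP_qy (s q y : ℂ) (M : ℕ) :
    PP s q (q * y) (M + 1) = (q * y + s) * q ^ M * PP s q y M := by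
  unfold PP
  rw [Finset.prod_range_succ']
  have h : ∀ k ∈ Finset.range M, q * y + s * q ^ (k + 1) = q * (y + s * q ^ k) := by
    intro k _; ring
  rw [Finset.prod_congr rfl h, Finset.prod_mul_distrib, Finset.prod_const,
    Finset.card_range]
  ring

lemma summable_ratio {E : Type*} [NormedField E] [CompleteSpace E] (f g : ℕ → E)
    (hfg : ∀ n, f (n + 1) = f n * g n) {L : ℝ} (hL : L < 1)
    (hg : Tendsto (fun n => ‖g n‖) atTop (𝓝 L)) : Summable f := by
  set r : ℝ := (L + 1) / 2 with hr
  have hLr : L < r := by rw [hr]; linarith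
  have hr1 : r < 1 := by rw [hr]; linarith
  refine summable_of_ratio_norm_eventually_le hr1 ?_
  filter_upwards [hg.eventually_lt_const hLr] with n hn
  rw [hfg n, norm_mul]
  calc ‖f n‖ * ‖g n‖ ≤ ‖f n‖ * r := mul_le_mul_of_nonneg_left hn.le (norm_nonneg _)
    _ = r * ‖f n‖ := mul_comm _ _

lemma T_succ (q s x y : ℂ) (i : ℕ) :
    T q s x y (i + 1) =
      T q s x y i * ((x + s * q ^ i) * (y + s * q ^ i) /
        ((1 - s ^ 2 * q ^ i) * (1 - q * q ^ i))) := by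
  unfold T
  rw [PP_succ, PP_succ, DD_succ, div_mul_div_comm]
  congr 1 <;> ring

lemma tendsto_qpow {q : ℂ} (hq : ‖q‖ < 1) : Tendsto (fun n : ℕ => q ^ n) atTop (𝓝 0) :=
  tendsto_pow_atTop_nhds_zero_of_norm_lt_one hq

lemma summable_T {q s x y : ℂ} (hq : ‖q‖ < 1) (hs : ‖s ^ 2‖ < 1) (hxy : ‖x * y‖ < 1) :
    Summable (T q s x y) := by
  apply summable_ratio (T q s x y)
    (fun i => (x + s * q ^ i) * (y + s * q ^ i) / ((1 - s ^ 2 * q ^ i) * (1 - q * q ^ i)))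
    (T_succ q s x y) hxy
  have h1 : Tendsto (fun i : ℕ =>
      (x + s * q ^ i) * (y + s * q ^ i) / ((1 - s ^ 2 * q ^ i) * (1 - q * q ^ i)))
      atTop (𝓝 (x * y)) := by
    have hp := tendsto_qpow hq
    have : Tendsto (fun i : ℕ =>
        (x + s * q ^ i) * (y + s * q ^ i) / ((1 - s ^ 2 * q ^ i) * (1 - q * q ^ i)))
        atTop (𝓝 ((x + s * 0) * (y + s * 0) / ((1 - s ^ 2 * 0) * (1 - q * 0)))) := by
      apply Tendsto.div
      · exact ((tendsto_const_nhds.add (tendsto_const_nhds.mul hp)).mul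
          (tendsto_const_nhds.add (tendsto_const_nhds.mul hp)))
      · exact ((tendsto_const_nhds.sub (tendsto_const_nhds.mul hp)).mul
          (tendsto_const_nhds.sub (tendsto_const_nhds.mul hp)))
      · norm_num
    simpa using this
  simpa using h1.norm

lemma summable_log (q a : ℂ) (hq : ‖q‖ < 1) :
    Summable (fun n : ℕ => Complex.log (1 - a * q ^ n)) := by
  apply Summable.of_norm_bounded_eventually (g := fun n : ℕ => 3 / 2 * (‖a‖ * ‖q‖ ^ n))
  · exact (summable_geometric_of_lt_one (norm_nonneg q) hq).mul_left _ |>.mul_left _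
  · rw [Nat.cofinite_eq_atTop]
    have hto : Tendsto (fun n : ℕ => ‖a * q ^ n‖) atTop (𝓝 0) := by
      have : Tendsto (fun n : ℕ => a * q ^ n) atTop (𝓝 (a * 0)) :=
        tendsto_const_nhds.mul (tendsto_qpow hq)
      simpa using this.norm
    filter_upwards [hto.eventually_le_const (by norm_num : (0:ℝ) < 1/2)] with n hn
    have h1 : ‖-(a * q ^ n)‖ ≤ 1 / 2 := by rwa [norm_neg]
    have h2 := Complex.norm_log_one_add_half_le_self h1
    have h3 : (1 : ℂ) + -(a * q ^ n) = 1 - a * q ^ n := by ring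
    rw [h3] at h2
    calc ‖Complex.log (1 - a * q ^ n)‖ ≤ 3 / 2 * ‖-(a * q ^ n)‖ := h2
      _ = 3 / 2 * (‖a‖ * ‖q‖ ^ n) := by rw [norm_neg, norm_mul, norm_pow]

lemma hasProd_one_sub (q a : ℂ) (hq : ‖q‖ < 1) :
    HasProd (fun k : ℕ => 1 - a * q ^ k) (∏' k : ℕ, (1 - a * q ^ k)) := by
  by_cases hz : ∃ k, 1 - a * q ^ k = 0
  · obtain ⟨k0, hk0⟩ := hz
    have h0 : HasProd (fun k : ℕ => 1 - a * q ^ k) 0 := by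
      have hev : ∀ᶠ t : Finset ℕ in atTop, ∏ i ∈ t, (1 - a * q ^ i) = 0 := by
        refine eventually_atTop.2 ⟨{k0}, fun t ht => Finset.prod_eq_zero (ht (Finset.mem_singleton_self k0)) hk0⟩
      exact Tendsto.congr' (by filter_upwards [hev] with t ht using ht.symm) tendsto_const_nhds
    rw [h0.tprod_eq]
    exact h0
  · push_neg at hz
    have hm : Multipliable (fun k : ℕ => 1 - a * q ^ k) := by
      have := Complex.multipliable_of_summable_log (f := fun n : ℕ => 1 - a * q ^ n)
        (summable_log q a hq)
      exact this
    exact hm.hasProd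

lemma tendsto_prod_range (q a : ℂ) (hq : ‖q‖ < 1) :
    Tendsto (fun N : ℕ => ∏ k ∈ Finset.range N, (1 - a * q ^ k)) atTop
      (𝓝 (∏' k : ℕ, (1 - a * q ^ k))) :=
  (hasProd_one_sub q a hq).tendsto_prod_nat

lemma tprod_ne {q a : ℂ} (hq : ‖q‖ < 1) (ha : ‖a‖ < 1) :
    (∏' k : ℕ, (1 - a * q ^ k)) ≠ 0 := by
  have hfn : ∀ (x : Unit) (n : ℕ), (fun n (_ : Unit) => 1 - a * q ^ n) n x ≠ 0 :=
    fun _ n => one_sub_ne ha hq.le n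
  have h := Complex.cexp_tsum_eq_tprod (f := fun n : ℕ => 1 - a * q ^ n) (fun n => hfn () n)
    (summable_log q a hq)
  rw [← h]
  exact Complex.exp_ne_zero _

noncomputable def W (q s x y : ℂ) : ℕ → ℂ
  | 0 => 0
  | (N + 1) => PP s q x (N + 1) *
      (PP s q y (N + 1) - q ^ N * (s + (s ^ 2 + q) * y - s ^ 2 * q ^ (N + 1) * y) * PP s q y N) /
      DD q s (N + 1)

lemma W_step {q s : ℂ} (hq : ‖q‖ < 1) (hs : ‖s ^ 2‖ < 1) (x y : ℂ) :
    ∀ N, (1 - x * y) * T q s x y N - (1 + s * y) * T q s x (q * y) N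
      = W q s x y N - W q s x y (N + 1)
  | 0 => by
    have h1 : (1 : ℂ) - s ^ 2 * q ^ 0 ≠ 0 := one_sub_ne hs hq.le 0
    have h2 : (1 : ℂ) - q * q ^ 0 ≠ 0 := one_sub_ne hq hq.le 0
    simp only [W, T, PP, DD, qPoch, zero_add, Finset.prod_range_zero, Finset.prod_range_one]
    rw [pow_zero] at h1 h2 ⊢
    rw [mul_one] at h1 h2
    field_simp
    ring
  | (M + 1) => by
    have hD : DD q s (M + 1) ≠ 0 := DD_ne hq hs (M + 1)
    have h1 : (1 : ℂ) - s ^ 2 * q ^ (M + 1) ≠ 0 := one_sub_ne hs hq.le (M + 1)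
    have h2 : (1 : ℂ) - q * q ^ (M + 1) ≠ 0 := one_sub_ne hq hq.le (M + 1)
    simp only [W, T]
    rw [PP_qy, DD_succ q s (M + 1), PP_succ s q x (M + 1), PP_succ s q y (M + 1),
      PP_succ s q y M]
    field_simp
    ring

lemma tendsto_W_zero {q s x y : ℂ} (hq : ‖q‖ < 1) (hs : ‖s ^ 2‖ < 1) (hxy : ‖x * y‖ < 1) :
    Tendsto (W q s x y) atTop (𝓝 0) := by
  rw [← tendsto_add_atTop_iff_nat 1]
  set V : ℕ → ℂ := fun N => PP s q x (N + 1) * PP s q y N * q ^ N / DD q s (N + 1) with hV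
  have hVrec : ∀ n, V (n + 1) = V n *
      ((x + s * q ^ (n + 1)) * (y + s * q ^ n) * q /
        ((1 - s ^ 2 * q ^ (n + 1)) * (1 - q * q ^ (n + 1)))) := by
    intro n
    rw [hV]
    simp only
    rw [PP_succ s q x (n + 1), PP_succ s q y n, DD_succ q s (n + 1), pow_succ,
      div_mul_div_comm]
    congr 1
    ring
  have hVsum : Summable V := by
    apply summable_ratio V _ hVrec (L := ‖x * y * q‖)
    · calc ‖x * y * q‖ = ‖x * y‖ * ‖q‖ := norm_mul _ _
        _ ≤ ‖x * y‖ * 1 := mul_le_mul_of_nonneg_left hq.le (norm_nonneg _)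
        _ = ‖x * y‖ := mul_one _
        _ < 1 := hxy
    · have hp := tendsto_qpow hq
      have hp1 : Tendsto (fun n : ℕ => q ^ (n + 1)) atTop (𝓝 0) := by
        have := hp.comp (tendsto_add_atTop_nat 1)
        exact this
      have : Tendsto (fun n : ℕ =>
          (x + s * q ^ (n + 1)) * (y + s * q ^ n) * q /
            ((1 - s ^ 2 * q ^ (n + 1)) * (1 - q * q ^ (n + 1))))
          atTop (𝓝 ((x + s * 0) * (y + s * 0) * q / ((1 - s ^ 2 * 0) * (1 - q * 0)))) := by
        apply Tendsto.div
        · exact ((tendsto_const_nhds.add (tendsto_const_nhds.mul hp1)).mul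
            (tendsto_const_nhds.add (tendsto_const_nhds.mul hp))).mul tendsto_const_nhds
        · exact (tendsto_const_nhds.sub (tendsto_const_nhds.mul hp1)).mul
            (tendsto_const_nhds.sub (tendsto_const_nhds.mul hp1))
        · norm_num
      simpa using this.norm
  have hV0 : Tendsto V atTop (𝓝 0) := hVsum.tendsto_atTop_zero
  have hT : Tendsto (fun N : ℕ => T q s x y (N + 1)) atTop (𝓝 0) :=
    (summable_T hq hs hxy).tendsto_atTop_zero.comp (tendsto_add_atTop_nat 1)
  have hc : Tendsto (fun N : ℕ => s + (s ^ 2 + q) * y - s ^ 2 * q ^ (N + 1) * y) atTop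
      (𝓝 (s + (s ^ 2 + q) * y - s ^ 2 * 0 * y)) := by
    apply Tendsto.sub tendsto_const_nhds
    have hp1 : Tendsto (fun n : ℕ => q ^ (n + 1)) atTop (𝓝 0) :=
      (tendsto_qpow hq).comp (tendsto_add_atTop_nat 1)
    exact ((tendsto_const_nhds.mul hp1).mul tendsto_const_nhds)
  have hWdecomp : ∀ N : ℕ, W q s x y (N + 1) =
      T q s x y (N + 1) - V N * (s + (s ^ 2 + q) * y - s ^ 2 * q ^ (N + 1) * y) := by
    intro N
    simp only [W, T, hV]
    rw [PP_succ s q y N]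
    ring
  have : Tendsto (fun N : ℕ =>
      T q s x y (N + 1) - V N * (s + (s ^ 2 + q) * y - s ^ 2 * q ^ (N + 1) * y)) atTop
      (𝓝 (0 - 0 * (s + (s ^ 2 + q) * y - s ^ 2 * 0 * y))) := hT.sub (hV0.mul hc)
  rw [show (0 : ℂ) - 0 * (s + (s ^ 2 + q) * y - s ^ 2 * 0 * y) = 0 by ring] at this
  exact Tendsto.congr (fun N => (hWdecomp N).symm) this

lemma FF_def (q s x y : ℂ) : FF q s x y = ∑' i, T q s x y i := rfl

lemma FE {q s x y : ℂ} (hq : ‖q‖ < 1) (hs : ‖s ^ 2‖ < 1) (hxy : ‖x * y‖ < 1) :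
    (1 - x * y) * FF q s x y = (1 + s * y) * FF q s x (q * y) := by
  have hxy' : ‖x * (q * y)‖ < 1 := by
    rw [show x * (q * y) = q * (x * y) by ring, norm_mul]
    exact lt_of_le_of_lt (mul_le_of_le_one_left (norm_nonneg _) hq.le) hxy
  have hS1 := (summable_T hq hs hxy).hasSum.tendsto_sum_nat
  have hS2 := (summable_T hq hs hxy').hasSum.tendsto_sum_nat
  have key : ∀ N, (1 - x * y) * (∑ i ∈ Finset.range N, T q s x y i)
      - (1 + s * y) * (∑ i ∈ Finset.range N, T q s x (q * y) i) = - W q s x y N := by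
    intro N
    induction N with
    | zero => simp [W]
    | succ M ih =>
      rw [Finset.sum_range_succ, Finset.sum_range_succ, mul_add, mul_add]
      have hst := W_step hq hs x y M
      linear_combination ih + hst
  have lim1 : Tendsto (fun N => (1 - x * y) * (∑ i ∈ Finset.range N, T q s x y i)
      - (1 + s * y) * (∑ i ∈ Finset.range N, T q s x (q * y) i)) atTop
      (𝓝 ((1 - x * y) * FF q s x y - (1 + s * y) * FF q s x (q * y))) := by
    rw [FF_def, FF_def]
    exact (tendsto_const_nhds.mul hS1).sub (tendsto_const_nhds.mul hS2)
  have lim2 : Tendsto (fun N => (1 - x * y) * (∑ i ∈ Finset.range N, T q s x y i)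
      - (1 + s * y) * (∑ i ∈ Finset.range N, T q s x (q * y) i)) atTop (𝓝 0) := by
    have hW := (tendsto_W_zero hq hs hxy).neg
    rw [neg_zero] at hW
    exact Tendsto.congr (fun N => (key N).symm) hW
  have h := tendsto_nhds_unique lim1 lim2
  linear_combination h

lemma tendsto_FF_orbit {q s x y : ℂ} (hq : ‖q‖ < 1) (hs : ‖s ^ 2‖ < 1) (hxy : ‖x * y‖ < 1) :
    Tendsto (fun N : ℕ => FF q s x (q ^ N * y)) atTop (𝓝 (FF q s x 0)) := by
  set K := Metric.closedBall (0 : ℂ) ‖y‖ with hK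
  set u : ℕ → ℝ := fun i =>
    (∏ k ∈ Finset.range i, (‖x‖ + ‖s‖ * ‖q‖ ^ k)) *
    (∏ k ∈ Finset.range i, (‖y‖ + ‖s‖ * ‖q‖ ^ k)) / ‖DD q s i‖ with hu
  have hDpos : ∀ i, 0 < ‖DD q s i‖ := fun i => norm_pos_iff.2 (DD_ne hq hs i)
  have husum : Summable u := by
    apply summable_ratio u (fun i =>
      ((‖x‖ + ‖s‖ * ‖q‖ ^ i) * (‖y‖ + ‖s‖ * ‖q‖ ^ i)) /
        (‖1 - s ^ 2 * q ^ i‖ * ‖1 - q * q ^ i‖)) (L := ‖x * y‖) ?_ hxy ?_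
    · intro i
      rw [hu]
      simp only
      rw [Finset.prod_range_succ, Finset.prod_range_succ, DD_succ, norm_mul, norm_mul,
        div_mul_div_comm]
      congr 1
      ring
    · have hp := tendsto_qpow hq
      have hpr : Tendsto (fun n : ℕ => ‖q‖ ^ n) atTop (𝓝 0) := by
        simpa using hp.norm
      have hn1 : Tendsto (fun n : ℕ => ‖1 - s ^ 2 * q ^ n‖) atTop (𝓝 1) := by
        have : Tendsto (fun n : ℕ => 1 - s ^ 2 * q ^ n) atTop (𝓝 (1 - s ^ 2 * 0)) :=
          tendsto_const_nhds.sub (tendsto_const_nhds.mul hp)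
        simpa using this.norm
      have hn2 : Tendsto (fun n : ℕ => ‖1 - q * q ^ n‖) atTop (𝓝 1) := by
        have : Tendsto (fun n : ℕ => 1 - q * q ^ n) atTop (𝓝 (1 - q * 0)) :=
          tendsto_const_nhds.sub (tendsto_const_nhds.mul hp)
        simpa using this.norm
      have hgl : Tendsto (fun i : ℕ =>
          ((‖x‖ + ‖s‖ * ‖q‖ ^ i) * (‖y‖ + ‖s‖ * ‖q‖ ^ i)) /
            (‖1 - s ^ 2 * q ^ i‖ * ‖1 - q * q ^ i‖)) atTop
          (𝓝 (((‖x‖ + ‖s‖ * 0) * (‖y‖ + ‖s‖ * 0)) / (1 * 1))) := by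
        apply Tendsto.div
        · exact (tendsto_const_nhds.add (tendsto_const_nhds.mul hpr)).mul
            (tendsto_const_nhds.add (tendsto_const_nhds.mul hpr))
        · exact hn1.mul hn2
        · norm_num
      have hg0 : ∀ i : ℕ, 0 ≤ ((‖x‖ + ‖s‖ * ‖q‖ ^ i) * (‖y‖ + ‖s‖ * ‖q‖ ^ i)) /
          (‖1 - s ^ 2 * q ^ i‖ * ‖1 - q * q ^ i‖) := by
        intro i
        apply div_nonneg
        · apply mul_nonneg <;>
            exact add_nonneg (norm_nonneg _) (mul_nonneg (norm_nonneg _) (pow_nonneg (norm_nonneg _) _))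
        · exact mul_nonneg (norm_nonneg _) (norm_nonneg _)
      have : Tendsto (fun i : ℕ =>
          ‖((‖x‖ + ‖s‖ * ‖q‖ ^ i) * (‖y‖ + ‖s‖ * ‖q‖ ^ i)) /
            (‖1 - s ^ 2 * q ^ i‖ * ‖1 - q * q ^ i‖)‖) atTop
          (𝓝 (((‖x‖ + ‖s‖ * 0) * (‖y‖ + ‖s‖ * 0)) / (1 * 1))) := by
        apply hgl.congr
        intro i
        rw [Real.norm_of_nonneg (hg0 i)]
      have hxyeq : ((‖x‖ + ‖s‖ * 0) * (‖y‖ + ‖s‖ * 0)) / (1 * 1) = ‖x * y‖ := by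
        rw [norm_mul]; ring
      rwa [hxyeq] at this
  have hbound : ∀ (n : ℕ) (w : ℂ), w ∈ K → ‖T q s x w n‖ ≤ u n := by
    intro n w hw
    have hwy : ‖w‖ ≤ ‖y‖ := by
      rw [hK] at hw
      simpa using Metric.mem_closedBall.1 hw
    rw [hu]
    simp only [T, norm_div, norm_mul]
    apply div_le_div_of_nonneg_right ?_ (norm_nonneg _)
    have hbx : ‖PP s q x n‖ ≤ ∏ k ∈ Finset.range n, (‖x‖ + ‖s‖ * ‖q‖ ^ k) := by
      rw [PP, norm_prod]
      apply Finset.prod_le_prod (fun k _ => norm_nonneg _)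
      intro k _
      calc ‖x + s * q ^ k‖ ≤ ‖x‖ + ‖s * q ^ k‖ := norm_add_le _ _
        _ = ‖x‖ + ‖s‖ * ‖q‖ ^ k := by rw [norm_mul, norm_pow]
    have hbw : ‖PP s q w n‖ ≤ ∏ k ∈ Finset.range n, (‖y‖ + ‖s‖ * ‖q‖ ^ k) := by
      rw [PP, norm_prod]
      apply Finset.prod_le_prod (fun k _ => norm_nonneg _)
      intro k _
      calc ‖w + s * q ^ k‖ ≤ ‖w‖ + ‖s * q ^ k‖ := norm_add_le _ _
        _ ≤ ‖y‖ + ‖s‖ * ‖q‖ ^ k := by rw [norm_mul, norm_pow]; exact add_le_add_left hwy _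
    exact mul_le_mul hbx hbw (norm_nonneg _)
      (Finset.prod_nonneg fun k _ => add_nonneg (norm_nonneg _)
        (mul_nonneg (norm_nonneg _) (pow_nonneg (norm_nonneg _) _)))
  have hcont : ContinuousOn (fun w => FF q s x w) K := by
    simp only [FF_def]
    apply continuousOn_tsum (u := u) ?_ husum hbound
    intro i
    apply Continuous.continuousOn
    unfold T
    apply Continuous.div_const
    apply continuous_const.mul
    unfold PP
    apply continuous_finset_prod
    intro k _
    exact continuous_id.add continuous_const
  have h0K : (0 : ℂ) ∈ K := by
    rw [hK]
    simpa using norm_nonneg y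
  have horb : Tendsto (fun N : ℕ => q ^ N * y) atTop (𝓝[K] (0 : ℂ)) := by
    apply tendsto_nhdsWithin_of_tendsto_nhds_of_eventually_within
    · have : Tendsto (fun N : ℕ => q ^ N * y) atTop (𝓝 (0 * y)) :=
        (tendsto_qpow hq).mul_const y
      simpa using this
    · apply Eventually.of_forall
      intro N
      rw [hK]
      simp only [Metric.mem_closedBall, dist_zero_right, norm_mul, norm_pow]
      calc ‖q‖ ^ N * ‖y‖ ≤ 1 * ‖y‖ :=
            mul_le_mul_of_nonneg_right (pow_le_one₀ (norm_nonneg q) hq.le) (norm_nonneg y)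
        _ = ‖y‖ := one_mul _
  exact ((hcont 0 h0K).tendsto).comp horb

lemma iterFE {q s x y : ℂ} (hq : ‖q‖ < 1) (hs : ‖s ^ 2‖ < 1) (hxy : ‖x * y‖ < 1) :
    ∀ N : ℕ, FF q s x y * (∏ k ∈ Finset.range N, (1 - x * y * q ^ k)) =
      (∏ k ∈ Finset.range N, (1 - (-s * y) * q ^ k)) * FF q s x (q ^ N * y) := by
  intro N
  induction N with
  | zero => simp
  | succ M ih =>
    rw [Finset.prod_range_succ, Finset.prod_range_succ, ← mul_assoc, ih]
    have hxy' : ‖x * (q ^ M * y)‖ < 1 := by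
      rw [show x * (q ^ M * y) = q ^ M * (x * y) by ring, norm_mul, norm_pow]
      calc ‖q‖ ^ M * ‖x * y‖ ≤ 1 * ‖x * y‖ :=
            mul_le_mul_of_nonneg_right (pow_le_one₀ (norm_nonneg q) hq.le) (norm_nonneg _)
        _ = ‖x * y‖ := one_mul _
        _ < 1 := hxy
    have hfe := FE hq hs hxy'
    have e1 : (1 : ℂ) - x * (q ^ M * y) = 1 - x * y * q ^ M := by ring
    have e2 : (1 : ℂ) + s * (q ^ M * y) = 1 - -s * y * q ^ M := by ring
    have e3 : q * (q ^ M * y) = q ^ (M + 1) * y := by rw [pow_succ]; ring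
    rw [e1, e2, e3] at hfe
    calc (∏ k ∈ Finset.range M, (1 - -s * y * q ^ k)) * FF q s x (q ^ M * y) *
          (1 - x * y * q ^ M)
        = (∏ k ∈ Finset.range M, (1 - -s * y * q ^ k)) *
            ((1 - x * y * q ^ M) * FF q s x (q ^ M * y)) := by ring
      _ = (∏ k ∈ Finset.range M, (1 - -s * y * q ^ k)) *
            ((1 - -s * y * q ^ M) * FF q s x (q ^ (M + 1) * y)) := by rw [hfe]
      _ = (∏ k ∈ Finset.range M, (1 - -s * y * q ^ k)) * (1 - -s * y * q ^ M) *
            FF q s x (q ^ (M + 1) * y) := by ring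

lemma step1 {q s x y : ℂ} (hq : ‖q‖ < 1) (hs : ‖s ^ 2‖ < 1) (hxy : ‖x * y‖ < 1) :
    FF q s x y * (∏' k : ℕ, (1 - x * y * q ^ k)) =
      (∏' k : ℕ, (1 - (-s * y) * q ^ k)) * FF q s x 0 := by
  have lim1 : Tendsto (fun N => FF q s x y * ∏ k ∈ Finset.range N, (1 - x * y * q ^ k)) atTop
      (𝓝 (FF q s x y * ∏' k : ℕ, (1 - x * y * q ^ k))) :=
    tendsto_const_nhds.mul (tendsto_prod_range q (x * y) hq)
  have lim2 : Tendsto (fun N => FF q s x y * ∏ k ∈ Finset.range N, (1 - x * y * q ^ k)) atTop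
      (𝓝 ((∏' k : ℕ, (1 - (-s * y) * q ^ k)) * FF q s x 0)) := by
    have := (tendsto_prod_range q (-s * y) hq).mul (tendsto_FF_orbit hq hs hxy)
    exact Tendsto.congr (fun N => (iterFE hq hs hxy N).symm) this
  exact tendsto_nhds_unique lim1 lim2

lemma Fsymm (q s x y : ℂ) : FF q s x y = FF q s y x := by
  rw [FF_def, FF_def]
  exact tsum_congr fun i => by rw [T, T, mul_comm (PP s q x i)]

lemma F0y (q s : ℂ) (hq : ‖q‖ < 1) (hs : ‖s ^ 2‖ < 1) (y : ℂ) :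
    FF q s 0 y = (∏' k : ℕ, (1 - (-s * y) * q ^ k)) * FF q s 0 0 := by
  have h0 : ‖(0 : ℂ) * y‖ < 1 := by simpa using one_pos
  have := step1 hq hs h0
  have hone : (∏' k : ℕ, (1 - (0 : ℂ) * y * q ^ k)) = 1 := by
    have : (fun k : ℕ => 1 - (0 : ℂ) * y * q ^ k) = fun _ => (1 : ℂ) := by
      funext k; ring
    rw [this, tprod_one]
  rwa [hone, mul_one] at this

lemma F0ms (q s : ℂ) (hq : ‖q‖ < 1) (hs : ‖s ^ 2‖ < 1) : FF q s 0 (-s) = 1 := by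
  rw [FF_def]
  rw [tsum_eq_single 0 ?_]
  · simp [T, PP, DD, qPoch]
  · intro i hi
    have hPP : PP s q (-s) i = 0 := by
      apply Finset.prod_eq_zero (i := 0)
      · exact Finset.mem_range.2 (Nat.pos_of_ne_zero hi)
      · simp
    rw [T, hPP, mul_zero, zero_div]

lemma FF00 (q s : ℂ) (hq : ‖q‖ < 1) (hs : ‖s ^ 2‖ < 1) :
    (∏' k : ℕ, (1 - s ^ 2 * q ^ k)) * FF q s 0 0 = 1 := by
  have h := F0y q s hq hs (-s)
  rw [F0ms q s hq hs] at h
  have : (fun k : ℕ => 1 - -s * -s * q ^ k) = fun k : ℕ => 1 - s ^ 2 * q ^ k := by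
    funext k; ring
  rw [this] at h
  exact h.symm

end QG

theorem stmt1 (q s x y : ℂ) (hq : ‖q‖ < 1) (hs : ‖s ^ 2‖ < 1) (hxy : ‖x * y‖ < 1) :
    ∑' i : ℕ,
      (∏ k ∈ Finset.range i, (x + s * q ^ k)) * (∏ k ∈ Finset.range i, (y + s * q ^ k)) /
        (qPoch q (s ^ 2) i * qPoch q q i)
      = (∏' k : ℕ, (1 - (-s * x) * q ^ k)) * (∏' k : ℕ, (1 - (-s * y) * q ^ k)) /
        ((∏' k : ℕ, (1 - s ^ 2 * q ^ k)) * ∏' k : ℕ, (1 - x * y * q ^ k)) := by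
  show QG.FF q s x y = _
  set Ax := ∏' k : ℕ, (1 - (-s * x) * q ^ k)
  set Ay := ∏' k : ℕ, (1 - (-s * y) * q ^ k)
  set C := ∏' k : ℕ, (1 - s ^ 2 * q ^ k)
  set B := ∏' k : ℕ, (1 - x * y * q ^ k)
  have hB : B ≠ 0 := QG.tprod_ne hq hxy
  have hC : C ≠ 0 := QG.tprod_ne hq hs
  have h1 : QG.FF q s x y * B = Ay * QG.FF q s x 0 := QG.step1 hq hs hxy
  have h2 : QG.FF q s x 0 = Ax * QG.FF q s 0 0 := by
    rw [QG.Fsymm q s x 0]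
    exact QG.F0y q s hq hs x
  have h3 : C * QG.FF q s 0 0 = 1 := QG.FF00 q s hq hs
  rw [h2] at h1
  rw [eq_div_iff (mul_ne_zero hC hB)]
  linear_combination C * h1 + Ax * Ay * h3
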